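/- Every point (u,p,v,π) ∈ ℝ^{2(p+q)} satisfying H₁ = H₂ = D = 0 at which the pairs (u,p) and (v,π) are both linearly independent is SL(2,ℝ)-gauge-equivalent (under the action (u,p)ᵀ↦g(u,p)ᵀ componentwise, (π,v)ᵀ↦g(π,v)ᵀ componentwise) to a point satisfying u·u = p·p = v·v = π·π > 0 and u·p = v·π = 0. -/

import Mathlib

open scoped BigOperators

namespace Stmt7

abbrev Phase (np nq : ℕ) := (Fin np → ℝ) × (Fin np → ℝ) × (Fin nq → ℝ) × (Fin nq → ℝ)

variable {np nq : ℕ}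

noncomputable def H1 (x : Phase np nq) : ℝ :=
  (1/2) * ((∑ i, (x.2.1 i)^2) - ∑ j, (x.2.2.1 j)^2)

noncomputable def H2 (x : Phase np nq) : ℝ :=
  (1/2) * ((∑ j, (x.2.2.2 j)^2) - ∑ i, (x.1 i)^2)

noncomputable def Dc (x : Phase np nq) : ℝ :=
  (∑ i, x.1 i * x.2.1 i) - ∑ j, x.2.2.1 j * x.2.2.2 j

/-- Euclidean dot product. -/
noncomputable def dot {n : ℕ} (a b : Fin n → ℝ) : ℝ := ∑ i, a i * b i

/-- The simultaneous `SL(2,ℝ)` gauge action: `(u_k,p_k)ᵀ ↦ g(u_k,p_k)ᵀ` and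
`(π_k,v_k)ᵀ ↦ g(π_k,v_k)ᵀ`, written on `(u,p,v,π)`. -/
noncomputable def gact (g : Matrix.SpecialLinearGroup (Fin 2) ℝ) (x : Phase np nq) :
    Phase np nq :=
  (fun i => (g : Matrix (Fin 2) (Fin 2) ℝ) 0 0 * x.1 i
      + (g : Matrix (Fin 2) (Fin 2) ℝ) 0 1 * x.2.1 i,
   fun i => (g : Matrix (Fin 2) (Fin 2) ℝ) 1 0 * x.1 i
      + (g : Matrix (Fin 2) (Fin 2) ℝ) 1 1 * x.2.1 i,
   fun j => (g : Matrix (Fin 2) (Fin 2) ℝ) 1 0 * x.2.2.2 j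
      + (g : Matrix (Fin 2) (Fin 2) ℝ) 1 1 * x.2.2.1 j,
   fun j => (g : Matrix (Fin 2) (Fin 2) ℝ) 0 0 * x.2.2.2 j
      + (g : Matrix (Fin 2) (Fin 2) ℝ) 0 1 * x.2.2.1 j)

lemma dot_lin {n : ℕ} (f h : Fin n → ℝ) (a b c d : ℝ) :
    dot (fun i => a * f i + b * h i) (fun i => c * f i + d * h i)
      = a*c * dot f f + (a*d + b*c) * dot f h + b*d * dot h h := by
  simp only [dot, Finset.mul_sum, ← Finset.sum_add_distrib]
  exact Finset.sum_congr rfl (fun i _ => by ring)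

lemma dot_nonneg {n : ℕ} (f : Fin n → ℝ) : 0 ≤ dot f f :=
  Finset.sum_nonneg (fun i _ => mul_self_nonneg _)

lemma dot_pos {n : ℕ} (f : Fin n → ℝ) (hf : f ≠ 0) : 0 < dot f f := by
  rcases (dot_nonneg f).lt_or_eq with h | h
  · exact h
  · exfalso; apply hf; funext i
    have := (Finset.sum_eq_zero_iff_of_nonneg (fun i _ => mul_self_nonneg (f i))).1 h.symm i (Finset.mem_univ i)
    have : f i = 0 := by nlinarith
    simpa using this

lemma key (A B C : ℝ) (hA : 0 < A) (hd : 0 < A*C - B*B) :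
    ∃ a c d : ℝ, a*d = 1 ∧ a*a*A = Real.sqrt (A*C - B*B) ∧
      a*c*A + a*d*B = 0 ∧
      c*c*A + (c*d + d*c)*B + d*d*C = Real.sqrt (A*C - B*B) := by
  set L := Real.sqrt (A*C - B*B) with hLdef
  have hL : 0 < L := Real.sqrt_pos.2 hd
  have hL2 : L * L = A*C - B*B := Real.mul_self_sqrt hd.le
  set sA := Real.sqrt A with hsAdef
  set sL := Real.sqrt L with hsLdef
  have hsA : sA * sA = A := Real.mul_self_sqrt hA.le
  have hsL : sL * sL = L := Real.mul_self_sqrt hL.le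
  have hsA0 : sA ≠ 0 := by positivity
  have hsL0 : sL ≠ 0 := by positivity
  have ha2 : sL/sA * (sL/sA) = L/A := by rw [div_mul_div_comm, hsA, hsL]
  have hd2 : sA/sL * (sA/sL) = A/L := by rw [div_mul_div_comm, hsA, hsL]
  have had : sL/sA * (sA/sL) = 1 := by
    rw [div_mul_div_comm]; rw [mul_comm sL sA]; exact div_self (by positivity)
  have hac : sL/sA * (-B/(sA*sL)) = -B/A := by
    field_simp; linear_combination B * hsA
  have hcd : -B/(sA*sL) * (sA/sL) = -B/L := by
    field_simp; linear_combination B * hsL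
  have hc2 : -B/(sA*sL) * (-B/(sA*sL)) = B*B/(A*L) := by
    rw [div_mul_div_comm]
    rw [show (sA*sL)*(sA*sL) = (sA*sA)*(sL*sL) by ring, hsA, hsL]
    ring_nf
  refine ⟨sL/sA, -B/(sA*sL), sA/sL, had, ?_, ?_, ?_⟩
  · rw [ha2, div_mul_cancel₀ _ (ne_of_gt hA)]
  · rw [hac, had]; field_simp; ring
  · have hc2A : -B/(sA*sL) * (-B/(sA*sL)) * A = B*B/L := by
      rw [hc2, div_mul_eq_mul_div, mul_comm (B*B) A, mul_div_mul_left _ _ (ne_of_gt hA)]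
    rw [mul_comm (sA/sL) (-B/(sA*sL)), hc2A]
    simp only [hcd, hd2]
    field_simp
    linear_combination (-1) * hL2


lemma dot_comm {n : ℕ} (f h : Fin n → ℝ) : dot f h = dot h f :=
  Finset.sum_congr rfl (fun i _ => mul_comm _ _)

lemma sum_sq_eq_dot {n : ℕ} (f : Fin n → ℝ) : ∑ i, (f i)^2 = dot f f := by
  simp only [dot, pow_two]


/-- Every regular point of the constraint surface is gauge-equivalent to a point
satisfying `u·u = p·p = v·v = π·π > 0` and `u·p = v·π = 0`. -/
theorem regular_gauge_fixing (x : Phase np nq)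
    (h1 : H1 x = 0) (h2 : H2 x = 0) (hD : Dc x = 0)
    (hup : ∀ a b : ℝ, a • x.1 + b • x.2.1 = 0 → a = 0 ∧ b = 0)
    (hvπ : ∀ a b : ℝ, a • x.2.2.1 + b • x.2.2.2 = 0 → a = 0 ∧ b = 0) :
    ∃ g : Matrix.SpecialLinearGroup (Fin 2) ℝ,
      dot (gact g x).1 (gact g x).1 = dot (gact g x).2.1 (gact g x).2.1 ∧
      dot (gact g x).2.1 (gact g x).2.1 = dot (gact g x).2.2.1 (gact g x).2.2.1 ∧
      dot (gact g x).2.2.1 (gact g x).2.2.1 = dot (gact g x).2.2.2 (gact g x).2.2.2 ∧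
      0 < dot (gact g x).1 (gact g x).1 ∧
      dot (gact g x).1 (gact g x).2.1 = 0 ∧
      dot (gact g x).2.2.1 (gact g x).2.2.2 = 0 := by
  -- names
  set u := x.1 with hu
  set p := x.2.1 with hp
  set v := x.2.2.1 with hv
  set w := x.2.2.2 with hw
  set A := dot u u with hA'
  set Bv := dot u p with hB'
  set C := dot p p with hC'
  -- constraints
  have hPV : C = dot v v := by
    have := h1; simp only [H1, sum_sq_eq_dot] at this; linarith
  have hUW : A = dot w w := by
    have := h2; simp only [H2, sum_sq_eq_dot] at this; linarith
  have hBvw : Bv = dot v w := by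
    have h := hD; simp only [Dc] at h
    rw [hB']
    exact sub_eq_zero.mp h
  -- A > 0
  have hu0 : u ≠ 0 := by
    intro h
    exact one_ne_zero ((hup 1 0 (by simp [← hu, h])).1)
  have hApos : 0 < A := dot_pos u hu0
  -- discriminant positive
  have hwv0 : (fun i => (-(Bv/A)) * u i + 1 * p i) ≠ 0 := by
    intro h
    have h' : (-(Bv/A)) • x.1 + (1:ℝ) • x.2.1 = 0 := by
      funext i
      have := congrFun h i
      simpa [← hu, ← hp] using this
    exact one_ne_zero (hup _ _ h').2
  have hd1 : 0 < (-(Bv/A)) * (-(Bv/A)) * A + ((-(Bv/A)) * 1 + 1 * (-(Bv/A))) * Bv + 1 * 1 * C := by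
    have := dot_pos _ hwv0
    rwa [dot_lin] at this
  have hACB : 0 < A * C - Bv * Bv := by
    have hAe : A * ((-(Bv/A)) * (-(Bv/A)) * A + ((-(Bv/A)) * 1 + 1 * (-(Bv/A))) * Bv + 1 * 1 * C)
        = A * C - Bv * Bv := by
      field_simp
      ring
    nlinarith [mul_pos hApos hd1]
  obtain ⟨a, c, d, had, hval1, hval2, hval3⟩ := key A Bv C hApos hACB
  set L := Real.sqrt (A * C - Bv * Bv) with hLdef
  have hLpos : 0 < L := Real.sqrt_pos.2 hACB
  refine ⟨⟨!![a, 0; c, d], by rw [Matrix.det_fin_two_of]; linarith [had]⟩, ?_, ?_, ?_, ?_, ?_, ?_⟩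
  all_goals simp only [gact, Matrix.cons_val', Matrix.cons_val_zero, Matrix.cons_val_one,
    Matrix.head_cons, Matrix.head_fin_const, Matrix.empty_val', Matrix.cons_val_fin_one,
    Matrix.SpecialLinearGroup.coe_mk, Matrix.of_apply, dot_lin, ← hu, ← hp, ← hv, ← hw,
    ← hA', ← hB', ← hC', ← hUW, ← hPV, dot_comm w v, ← hBvw]
  all_goals first
    | rfl
    | linear_combination hval1 - hval3
    | linear_combination hval3 - hval1
    | linear_combination hval2
    | linarith [hval1, hval3, hLpos]
    | nlinarith [hval1, hval3, hLpos]



end Stmt7
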